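/- Necessity of monotonicity of the spectrum: if there exist q ∈ (0,1) and ε > 0 with [q−ε, q+ε] ⊂ (0,1) and ∫_{q−ε}^q φ(p) dp < ∫_q^{q+ε} φ(p) dp, then M_φ is not sub-additive: there exist random variables X, Y on a four-point probability space with M_φ(X+Y) > M_φ(X) + M_φ(Y). -/

import Mathlib

open MeasureTheory

/-- The generalized inverse (lower quantile function) of the CDF of `X`. -/
noncomputable def qf {Ω : Type*} [MeasurableSpace Ω] (μ : Measure Ω) (X : Ω → ℝ) (p : ℝ) : ℝ :=
  sInf {x | p ≤ (μ {ω | X ω ≤ x}).toReal}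

/-- The spectral risk measure generated by the risk spectrum `φ`. -/
noncomputable def Mphi {Ω : Type*} [MeasurableSpace Ω] (μ : Measure Ω)
    (φ : ℝ → ℝ) (X : Ω → ℝ) : ℝ :=
  -∫ p in Set.Ioc (0:ℝ) 1, qf μ X p * φ p

/-- Four-point measure with the given weights. -/
noncomputable def μ4 (w1 w2 w3 w4 : ℝ) : Measure (Fin 4) :=
  ENNReal.ofReal w1 • Measure.dirac 0 + ENNReal.ofReal w2 • Measure.dirac 1 +
    ENNReal.ofReal w3 • Measure.dirac 2 + ENNReal.ofReal w4 • Measure.dirac 3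

lemma dirac_term (w : ℝ) (a : Fin 4) (s : Set (Fin 4)) [Decidable (a ∈ s)] :
    ENNReal.ofReal w * Measure.dirac a s = ENNReal.ofReal (if a ∈ s then w else 0) := by
  have hs : MeasurableSet s := trivial
  rw [Measure.dirac_apply' a hs]
  by_cases h : a ∈ s <;> simp [h]

lemma μ4_apply (w1 w2 w3 w4 : ℝ) (s : Set (Fin 4)) [Decidable ((0:Fin 4) ∈ s)]
    [Decidable ((1:Fin 4) ∈ s)] [Decidable ((2:Fin 4) ∈ s)] [Decidable ((3:Fin 4) ∈ s)]
    (h1 : 0 ≤ w1) (h2 : 0 ≤ w2) (h3 : 0 ≤ w3) (h4 : 0 ≤ w4) :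
    μ4 w1 w2 w3 w4 s =
      ENNReal.ofReal ((if (0:Fin 4) ∈ s then w1 else 0) + (if (1:Fin 4) ∈ s then w2 else 0) +
        (if (2:Fin 4) ∈ s then w3 else 0) + (if (3:Fin 4) ∈ s then w4 else 0)) := by
  have e1 := dirac_term w1 0 s; have e2 := dirac_term w2 1 s
  have e3 := dirac_term w3 2 s; have e4 := dirac_term w4 3 s
  simp only [μ4, Measure.add_apply, Measure.smul_apply, smul_eq_mul, e1, e2, e3, e4]
  rw [← ENNReal.ofReal_add, ← ENNReal.ofReal_add, ← ENNReal.ofReal_add] <;>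
    positivity

lemma μ4_real (w1 w2 w3 w4 : ℝ) (s : Set (Fin 4)) [Decidable ((0:Fin 4) ∈ s)]
    [Decidable ((1:Fin 4) ∈ s)] [Decidable ((2:Fin 4) ∈ s)] [Decidable ((3:Fin 4) ∈ s)]
    (h1 : 0 ≤ w1) (h2 : 0 ≤ w2) (h3 : 0 ≤ w3) (h4 : 0 ≤ w4) :
    (μ4 w1 w2 w3 w4 s).toReal =
      (if (0:Fin 4) ∈ s then w1 else 0) + (if (1:Fin 4) ∈ s then w2 else 0) +
        (if (2:Fin 4) ∈ s then w3 else 0) + (if (3:Fin 4) ∈ s then w4 else 0) := by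
  rw [μ4_apply w1 w2 w3 w4 s h1 h2 h3 h4, ENNReal.toReal_ofReal]
  positivity

lemma qf_eq_of (μ : Measure (Fin 4)) (Z : Fin 4 → ℝ) (p v : ℝ)
    (hup : ∀ x, v ≤ x → p ≤ (μ {ω | Z ω ≤ x}).toReal)
    (hlo : ∀ x, x < v → (μ {ω | Z ω ≤ x}).toReal < p) :
    qf μ Z p = v := by
  have h : {x | p ≤ (μ {ω | Z ω ≤ x}).toReal} = Set.Ici v := by
    ext x
    simp only [Set.mem_setOf_eq, Set.mem_Ici]
    exact ⟨fun h => not_lt.1 fun hx => absurd h (not_le.2 (hlo x hx)), hup x⟩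
  rw [qf, h]
  exact csInf_Ici

open Classical in
/-- A four-valued step function. -/
noncomputable def st4 (a b c d c1 c2 c3 p : ℝ) : ℝ :=
  if p ≤ c1 then a else if p ≤ c2 then b else if p ≤ c3 then c else d

set_option maxHeartbeats 2000000 in
theorem subadditivity_fails_of_nonmonotone_spectrum (φ : ℝ → ℝ)
    (hint : IntegrableOn φ (Set.Ioc (0:ℝ) 1))
    (q ε : ℝ) (hε : 0 < ε) (h0 : 0 < q - ε) (h1 : q + ε < 1)
    (hlt : (∫ p in Set.Ioc (q - ε) q, φ p) < ∫ p in Set.Ioc q (q + ε), φ p) :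
    ∃ (μ : Measure (Fin 4)) (X Y : Fin 4 → ℝ), IsProbabilityMeasure μ ∧
      Mphi μ φ X + Mphi μ φ Y < Mphi μ φ (X + Y) := by
  classical
  have hw1 : (0:ℝ) ≤ q - ε := h0.le
  have hw4 : (0:ℝ) ≤ 1 - q - ε := by linarith
  have hεp : (0:ℝ) ≤ ε := hε.le
  set μ : Measure (Fin 4) := μ4 (q - ε) ε ε (1 - q - ε) with hμ
  set X : Fin 4 → ℝ := ![0,1,2,3] with hXdef
  set Y : Fin 4 → ℝ := ![0,2,1,3] with hYdef
  refine ⟨μ, X, Y, ?_, ?_⟩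
  · constructor
    rw [hμ, μ4_apply _ _ _ _ _ hw1 hεp hεp hw4]
    simp only [Set.mem_univ, if_true]
    rw [show q - ε + ε + ε + (1 - q - ε) = 1 by ring, ENNReal.ofReal_one]
  -- the cumulative distribution functions
  have FZ : ∀ (Z : Fin 4 → ℝ) (x : ℝ), (μ {ω | Z ω ≤ x}).toReal =
      (if Z 0 ≤ x then q - ε else 0) + (if Z 1 ≤ x then ε else 0) +
      (if Z 2 ≤ x then ε else 0) + (if Z 3 ≤ x then 1 - q - ε else 0) := by
    intro Z x
    rw [hμ, μ4_real _ _ _ _ _ hw1 hεp hεp hw4]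
    simp only [Set.mem_setOf_eq]
  have FX : ∀ x : ℝ, (μ {ω | X ω ≤ x}).toReal =
      (if 0 ≤ x then q - ε else 0) + (if 1 ≤ x then ε else 0) +
      (if 2 ≤ x then ε else 0) + (if 3 ≤ x then 1 - q - ε else 0) := by
    intro x; rw [FZ]
    norm_num [hXdef, Matrix.cons_val_two, Matrix.cons_val_three, Matrix.head_cons, Matrix.tail_cons]
  have FY : ∀ x : ℝ, (μ {ω | Y ω ≤ x}).toReal =
      (if 0 ≤ x then q - ε else 0) + (if 2 ≤ x then ε else 0) +
      (if 1 ≤ x then ε else 0) + (if 3 ≤ x then 1 - q - ε else 0) := by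
    intro x; rw [FZ]
    norm_num [hYdef, Matrix.cons_val_two, Matrix.cons_val_three, Matrix.head_cons, Matrix.tail_cons]
  have FS : ∀ x : ℝ, (μ {ω | (X + Y) ω ≤ x}).toReal =
      (if 0 ≤ x then q - ε else 0) + (if 3 ≤ x then ε else 0) +
      (if 3 ≤ x then ε else 0) + (if 6 ≤ x then 1 - q - ε else 0) := by
    intro x; rw [FZ]
    norm_num [hXdef, hYdef, Pi.add_apply, Matrix.cons_val_two, Matrix.cons_val_three, Matrix.head_cons, Matrix.tail_cons]
  -- the quantile functions
  have qfX : ∀ p ∈ Set.Ioc (0:ℝ) 1, qf μ X p = st4 0 1 2 3 (q-ε) q (q+ε) p := by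
    rintro p ⟨hp0, hp1⟩
    rcases le_or_gt p (q - ε) with h2 | h2
    · rw [show st4 0 1 2 3 (q-ε) q (q+ε) p = 0 by simp only [st4]; split_ifs <;> linarith]
      refine qf_eq_of μ X p 0 ?_ ?_ <;> intro x hx <;> rw [FX] <;> split_ifs <;> linarith
    rcases le_or_gt p q with h3 | h3
    · rw [show st4 0 1 2 3 (q-ε) q (q+ε) p = 1 by simp only [st4]; split_ifs <;> linarith]
      refine qf_eq_of μ X p 1 ?_ ?_ <;> intro x hx <;> rw [FX] <;> split_ifs <;> linarith
    rcases le_or_gt p (q + ε) with h4 | h4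
    · rw [show st4 0 1 2 3 (q-ε) q (q+ε) p = 2 by simp only [st4]; split_ifs <;> linarith]
      refine qf_eq_of μ X p 2 ?_ ?_ <;> intro x hx <;> rw [FX] <;> split_ifs <;> linarith
    · rw [show st4 0 1 2 3 (q-ε) q (q+ε) p = 3 by simp only [st4]; split_ifs <;> linarith]
      refine qf_eq_of μ X p 3 ?_ ?_ <;> intro x hx <;> rw [FX] <;> split_ifs <;> linarith
  have qfY : ∀ p ∈ Set.Ioc (0:ℝ) 1, qf μ Y p = st4 0 1 2 3 (q-ε) q (q+ε) p := by
    rintro p ⟨hp0, hp1⟩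
    rcases le_or_gt p (q - ε) with h2 | h2
    · rw [show st4 0 1 2 3 (q-ε) q (q+ε) p = 0 by simp only [st4]; split_ifs <;> linarith]
      refine qf_eq_of μ Y p 0 ?_ ?_ <;> intro x hx <;> rw [FY] <;> split_ifs <;> linarith
    rcases le_or_gt p q with h3 | h3
    · rw [show st4 0 1 2 3 (q-ε) q (q+ε) p = 1 by simp only [st4]; split_ifs <;> linarith]
      refine qf_eq_of μ Y p 1 ?_ ?_ <;> intro x hx <;> rw [FY] <;> split_ifs <;> linarith
    rcases le_or_gt p (q + ε) with h4 | h4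
    · rw [show st4 0 1 2 3 (q-ε) q (q+ε) p = 2 by simp only [st4]; split_ifs <;> linarith]
      refine qf_eq_of μ Y p 2 ?_ ?_ <;> intro x hx <;> rw [FY] <;> split_ifs <;> linarith
    · rw [show st4 0 1 2 3 (q-ε) q (q+ε) p = 3 by simp only [st4]; split_ifs <;> linarith]
      refine qf_eq_of μ Y p 3 ?_ ?_ <;> intro x hx <;> rw [FY] <;> split_ifs <;> linarith
  have qfS : ∀ p ∈ Set.Ioc (0:ℝ) 1, qf μ (X + Y) p = st4 0 3 3 6 (q-ε) (q+ε) (q+ε) p := by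
    rintro p ⟨hp0, hp1⟩
    rcases le_or_gt p (q - ε) with h2 | h2
    · rw [show st4 0 3 3 6 (q-ε) (q+ε) (q+ε) p = 0 by simp only [st4]; split_ifs <;> linarith]
      refine qf_eq_of μ (X + Y) p 0 ?_ ?_ <;> intro x hx <;> rw [FS] <;> split_ifs <;> linarith
    rcases le_or_gt p (q + ε) with h3 | h3
    · rw [show st4 0 3 3 6 (q-ε) (q+ε) (q+ε) p = 3 by simp only [st4]; split_ifs <;> linarith]
      refine qf_eq_of μ (X + Y) p 3 ?_ ?_ <;> intro x hx <;> rw [FS] <;> split_ifs <;> linarith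
    · rw [show st4 0 3 3 6 (q-ε) (q+ε) (q+ε) p = 6 by simp only [st4]; split_ifs <;> linarith]
      refine qf_eq_of μ (X + Y) p 6 ?_ ?_ <;> intro x hx <;> rw [FS] <;> split_ifs <;> linarith
  -- integral machinery
  have hcongr : ∀ (Z : Fin 4 → ℝ) (st : ℝ → ℝ),
      (∀ p ∈ Set.Ioc (0:ℝ) 1, qf μ Z p = st p) →
      ∫ p in Set.Ioc (0:ℝ) 1, qf μ Z p * φ p = ∫ p in Set.Ioc (0:ℝ) 1, st p * φ p :=
    fun Z st h => setIntegral_congr_fun measurableSet_Ioc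
      (fun p hp => by show qf μ Z p * φ p = st p * φ p; rw [h p hp])
  have hpiece : ∀ (st : ℝ → ℝ) (u v k : ℝ), (∀ p ∈ Set.Ioc u v, st p = k) →
      ∫ p in Set.Ioc u v, st p * φ p = k * ∫ p in Set.Ioc u v, φ p := by
    intro st u v k h
    rw [setIntegral_congr_fun measurableSet_Ioc
      (fun p hp => by show st p * φ p = k * φ p; rw [h p hp] :
        Set.EqOn (fun p => st p * φ p) (fun p => k * φ p) _)]
    exact integral_const_mul k φ
  have hsplit : ∀ f : ℝ → ℝ, IntegrableOn f (Set.Ioc (0:ℝ) 1) →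
      ∫ p in Set.Ioc (0:ℝ) 1, f p = (∫ p in Set.Ioc (0:ℝ) (q-ε), f p) +
        (∫ p in Set.Ioc (q-ε) q, f p) + (∫ p in Set.Ioc q (q+ε), f p) +
        (∫ p in Set.Ioc (q+ε) 1, f p) := by
    intro f hf
    have l1 : (0:ℝ) ≤ q - ε := hw1
    have l2 : q - ε ≤ q := by linarith
    have l3 : q ≤ q + ε := by linarith
    have l4 : q + ε ≤ 1 := h1.le
    have i1 : IntervalIntegrable f volume 0 (q-ε) :=
      (intervalIntegrable_iff_integrableOn_Ioc_of_le l1).2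
        (hf.mono_set (Set.Ioc_subset_Ioc le_rfl (by linarith)))
    have i2 : IntervalIntegrable f volume (q-ε) q :=
      (intervalIntegrable_iff_integrableOn_Ioc_of_le l2).2
        (hf.mono_set (Set.Ioc_subset_Ioc l1 (by linarith)))
    have i3 : IntervalIntegrable f volume q (q+ε) :=
      (intervalIntegrable_iff_integrableOn_Ioc_of_le l3).2
        (hf.mono_set (Set.Ioc_subset_Ioc (by linarith) l4))
    have i4 : IntervalIntegrable f volume (q+ε) 1 :=
      (intervalIntegrable_iff_integrableOn_Ioc_of_le l4).2
        (hf.mono_set (Set.Ioc_subset_Ioc (by linarith) le_rfl))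
    calc ∫ p in Set.Ioc (0:ℝ) 1, f p
        = ∫ p in (0:ℝ)..1, f p := (intervalIntegral.integral_of_le (by linarith)).symm
      _ = (∫ p in (0:ℝ)..(q-ε), f p) + ∫ p in (q-ε)..1, f p :=
          (intervalIntegral.integral_add_adjacent_intervals i1 (i2.trans (i3.trans i4))).symm
      _ = (∫ p in (0:ℝ)..(q-ε), f p) + ((∫ p in (q-ε)..q, f p) + ∫ p in q..1, f p) := by
          rw [intervalIntegral.integral_add_adjacent_intervals i2 (i3.trans i4)]
      _ = (∫ p in (0:ℝ)..(q-ε), f p) + ((∫ p in (q-ε)..q, f p) +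
            ((∫ p in q..(q+ε), f p) + ∫ p in (q+ε)..1, f p)) := by
          rw [intervalIntegral.integral_add_adjacent_intervals i3 i4]
      _ = (∫ p in Set.Ioc (0:ℝ) (q-ε), f p) + (∫ p in Set.Ioc (q-ε) q, f p) +
            (∫ p in Set.Ioc q (q+ε), f p) + (∫ p in Set.Ioc (q+ε) 1, f p) := by
          rw [intervalIntegral.integral_of_le l1, intervalIntegral.integral_of_le l2,
            intervalIntegral.integral_of_le l3, intervalIntegral.integral_of_le l4]
          ring
  -- integrability of step * φ
  have mst : ∀ a b c d c1 c2 c3 : ℝ, Measurable (st4 a b c d c1 c2 c3) := by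
    intro a b c d c1 c2 c3
    unfold st4
    exact Measurable.ite measurableSet_Iic measurable_const
      (Measurable.ite measurableSet_Iic measurable_const
        (Measurable.ite measurableSet_Iic measurable_const measurable_const))
  have intst : ∀ a b c d c1 c2 c3 : ℝ, 0 ≤ a → a ≤ 6 → 0 ≤ b → b ≤ 6 → 0 ≤ c → c ≤ 6 →
      0 ≤ d → d ≤ 6 →
      IntegrableOn (fun p => st4 a b c d c1 c2 c3 p * φ p) (Set.Ioc (0:ℝ) 1) := by
    intro a b c d c1 c2 c3 ha ha' hb hb' hc hc' hd hd'
    refine hint.bdd_mul (mst a b c d c1 c2 c3).aestronglyMeasurable (c := 6) (Filter.Eventually.of_forall fun x => ?_)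
    simp only [st4, Real.norm_eq_abs, abs_le]
    constructor <;> split_ifs <;> linarith
  -- compute the three integrals
  have MXval : ∫ p in Set.Ioc (0:ℝ) 1, qf μ X p * φ p =
      (∫ p in Set.Ioc (q-ε) q, φ p) + 2 * (∫ p in Set.Ioc q (q+ε), φ p) +
        3 * (∫ p in Set.Ioc (q+ε) 1, φ p) := by
    rw [hcongr X _ qfX, hsplit _ (intst 0 1 2 3 (q-ε) q (q+ε) (by norm_num) (by norm_num)
      (by norm_num) (by norm_num) (by norm_num) (by norm_num) (by norm_num) (by norm_num)),
      hpiece _ 0 (q-ε) 0 (fun p hp => by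
        obtain ⟨a1, a2⟩ := hp; simp only [st4]; split_ifs <;> linarith),
      hpiece _ (q-ε) q 1 (fun p hp => by
        obtain ⟨a1, a2⟩ := hp; simp only [st4]; split_ifs <;> linarith),
      hpiece _ q (q+ε) 2 (fun p hp => by
        obtain ⟨a1, a2⟩ := hp; simp only [st4]; split_ifs <;> linarith),
      hpiece _ (q+ε) 1 3 (fun p hp => by
        obtain ⟨a1, a2⟩ := hp; simp only [st4]; split_ifs <;> linarith)]
    ring
  have MYval : ∫ p in Set.Ioc (0:ℝ) 1, qf μ Y p * φ p =
      (∫ p in Set.Ioc (q-ε) q, φ p) + 2 * (∫ p in Set.Ioc q (q+ε), φ p) +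
        3 * (∫ p in Set.Ioc (q+ε) 1, φ p) := by
    rw [hcongr Y _ qfY, hsplit _ (intst 0 1 2 3 (q-ε) q (q+ε) (by norm_num) (by norm_num)
      (by norm_num) (by norm_num) (by norm_num) (by norm_num) (by norm_num) (by norm_num)),
      hpiece _ 0 (q-ε) 0 (fun p hp => by
        obtain ⟨a1, a2⟩ := hp; simp only [st4]; split_ifs <;> linarith),
      hpiece _ (q-ε) q 1 (fun p hp => by
        obtain ⟨a1, a2⟩ := hp; simp only [st4]; split_ifs <;> linarith),
      hpiece _ q (q+ε) 2 (fun p hp => by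
        obtain ⟨a1, a2⟩ := hp; simp only [st4]; split_ifs <;> linarith),
      hpiece _ (q+ε) 1 3 (fun p hp => by
        obtain ⟨a1, a2⟩ := hp; simp only [st4]; split_ifs <;> linarith)]
    ring
  have MSval : ∫ p in Set.Ioc (0:ℝ) 1, qf μ (X + Y) p * φ p =
      3 * (∫ p in Set.Ioc (q-ε) q, φ p) + 3 * (∫ p in Set.Ioc q (q+ε), φ p) +
        6 * (∫ p in Set.Ioc (q+ε) 1, φ p) := by
    rw [hcongr (X + Y) _ qfS, hsplit _ (intst 0 3 3 6 (q-ε) (q+ε) (q+ε) (by norm_num)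
      (by norm_num) (by norm_num) (by norm_num) (by norm_num) (by norm_num) (by norm_num)
      (by norm_num)),
      hpiece _ 0 (q-ε) 0 (fun p hp => by
        obtain ⟨a1, a2⟩ := hp; simp only [st4]; split_ifs <;> linarith),
      hpiece _ (q-ε) q 3 (fun p hp => by
        obtain ⟨a1, a2⟩ := hp; simp only [st4]; split_ifs <;> linarith),
      hpiece _ q (q+ε) 3 (fun p hp => by
        obtain ⟨a1, a2⟩ := hp; simp only [st4]; split_ifs <;> linarith),
      hpiece _ (q+ε) 1 6 (fun p hp => by
        obtain ⟨a1, a2⟩ := hp; simp only [st4]; split_ifs <;> linarith)]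
    ring
  simp only [Mphi, MXval, MYval, MSval]
  linarith
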